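/- arXiv:1209.6211 — 2 statements merged into one kernel-verified Lean document; each statement's English description precedes it below -/
import Mathlib

section
/- For all complex numbers a and b, every real number ξ, and every r with 0 < r < 1, one has (1/(2πi)) ∮_{|η−i|=r} (a+ηb)/((1+η²)²(ξ−η)) dη = −ia/(4(ξ−i)) − (a+ib)/(4(ξ−i)²). -/
open Complex Real
set_option maxHeartbeats 1000000

private theorem my_circleIntegral_add {f g : ℂ → ℂ} {c : ℂ} {R : ℝ}
    (hf : CircleIntegrable f c R) (hg : CircleIntegrable g c R) :
    (∮ z in C(c, R), (f z + g z)) =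
      (∮ z in C(c, R), f z) + (∮ z in C(c, R), g z) := by
  simp only [circleIntegral, smul_add, intervalIntegral.integral_add hf.out hg.out]

/-- For all complex `a`, `b`, every real `ξ` and every `0 < r < 1`,
`(1/(2πi)) ∮_{|η−i|=r} (a+ηb)/((1+η²)²(ξ−η)) dη = −ia/(4(ξ−i)) − (a+ib)/(4(ξ−i)²)`. -/
theorem stmt_11 (a b : ℂ) (ξ : ℝ) (r : ℝ) (hr0 : 0 < r) (hr1 : r < 1) :
    (1 / (2 * (π : ℂ) * I)) *
        (∮ η in C(I, r), (a + η * b) / ((1 + η ^ 2) ^ 2 * ((ξ : ℂ) - η))) =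
      -I * a / (4 * ((ξ : ℂ) - I)) - (a + I * b) / (4 * ((ξ : ℂ) - I) ^ 2) := by
  have hs : (ξ : ℂ) - I ≠ 0 := by
    intro hc
    have := congrArg Complex.im hc
    simp at this
  -- the holomorphic numerator after factoring out the double pole at I
  set h : ℂ → ℂ := fun z => (a + z * b) / ((z + I) ^ 2 * ((ξ : ℂ) - z)) with hh
  -- points of ball I 1 avoid the other singularities
  have hball : ∀ z ∈ Metric.ball I 1, z + I ≠ 0 ∧ (ξ : ℂ) - z ≠ 0 := by
    intro z hz
    rw [Metric.mem_ball] at hz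
    constructor
    · intro hc
      have hz' : z = -I := by linear_combination hc
      rw [hz'] at hz
      have hd2 : dist (-I) I = 2 := by
        rw [Complex.dist_eq, show (-I - I : ℂ) = -(2 * I) by ring]
        simp
      linarith [hd2 ▸ hz]
    · intro hc
      have hz' : z = (ξ : ℂ) := by linear_combination -hc
      rw [hz'] at hz
      have h1 : (1 : ℝ) ≤ dist ((ξ : ℂ)) I := by
        rw [Complex.dist_eq]
        calc (1 : ℝ) = |((ξ : ℂ) - I).im| := by simp
        _ ≤ ‖(ξ : ℂ) - I‖ := Complex.abs_im_le_norm _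
      linarith
  -- h is differentiable on ball I 1
  have hdh : DifferentiableOn ℂ h (Metric.ball I 1) := by
    intro z hz
    obtain ⟨h1, h2⟩ := hball z hz
    apply DifferentiableAt.differentiableWithinAt
    apply DifferentiableAt.div
    · fun_prop
    · fun_prop
    · exact mul_ne_zero (pow_ne_zero _ h1) h2
  set g : ℂ → ℂ := dslope (dslope h I) I with hg
  have hmem : Metric.ball I (1 : ℝ) ∈ nhds I := Metric.ball_mem_nhds I one_pos
  have hdg : DifferentiableOn ℂ g (Metric.ball I 1) := by
    rw [hg, Complex.differentiableOn_dslope hmem, Complex.differentiableOn_dslope hmem]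
    exact hdh
  have hsub : Metric.closedBall I r ⊆ Metric.ball I 1 := Metric.closedBall_subset_ball hr1
  have hsph : Metric.sphere I r ⊆ Metric.ball I 1 :=
    Metric.sphere_subset_closedBall.trans hsub
  obtain ⟨D1, hD1⟩ : ∃ D1, deriv h I = D1 := ⟨_, rfl⟩
  obtain ⟨H0, hH0⟩ : ∃ H0, h I = H0 := ⟨_, rfl⟩
  -- pointwise identity on the sphere
  have key : Set.EqOn (fun z => (a + z * b) / ((1 + z ^ 2) ^ 2 * ((ξ : ℂ) - z)))
      (fun z => g z + (D1 * (z - I)⁻¹ + H0 * (z - I) ^ (-2 : ℤ)))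
      (Metric.sphere I r) := by
    intro z hz
    have hzI : z ≠ I := by
      intro hc
      rw [Metric.mem_sphere, hc] at hz
      simp at hz
      exact hr0.ne hz
    obtain ⟨h1, h2⟩ := hball z (hsph hz)
    have hzI' : z - I ≠ 0 := sub_ne_zero.2 hzI
    have hgz : g z = (z - I)⁻¹ * ((z - I)⁻¹ * (h z - H0) - D1) := by
      rw [hg, dslope_of_ne _ hzI, slope_def_field, div_eq_inv_mul]
      congr 1
      rw [dslope_of_ne _ hzI, dslope_same, slope_def_field, div_eq_inv_mul, hD1, hH0]
    have hfac : (1 : ℂ) + z ^ 2 = (z - I) * (z + I) := by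
      linear_combination Complex.I_sq
    simp only
    rw [hgz]
    show (a + z * b) / ((1 + z ^ 2) ^ 2 * ((ξ : ℂ) - z)) =
      (z - I)⁻¹ * ((z - I)⁻¹ * ((a + z * b) / ((z + I) ^ 2 * ((ξ : ℂ) - z)) - H0) - D1) +
        (D1 * (z - I)⁻¹ + H0 * (z - I) ^ (-2 : ℤ))
    have hstep : (z - I)⁻¹ *
          ((z - I)⁻¹ * ((a + z * b) / ((z + I) ^ 2 * ((ξ : ℂ) - z)) - H0) - D1) +
          (D1 * (z - I)⁻¹ + H0 * (z - I) ^ (-2 : ℤ)) =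
        (z - I)⁻¹ * ((z - I)⁻¹ * ((a + z * b) / ((z + I) ^ 2 * ((ξ : ℂ) - z)))) := by
      rw [zpow_neg, zpow_two, mul_inv]
      ring
    rw [hstep, hfac, inv_mul_eq_div, inv_mul_eq_div,
      show ((z - I) * (z + I)) ^ 2 * ((ξ : ℂ) - z) =
        (z + I) ^ 2 * ((ξ : ℂ) - z) * (z - I) * (z - I) by ring,
      ← div_div, ← div_div]
  rw [circleIntegral.integral_congr hr0.le key]
  -- integrability of the pieces
  have int_g : CircleIntegrable g I r :=
    ((hdg.continuousOn).mono hsph).circleIntegrable hr0.le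
  have int_1 : CircleIntegrable (fun z => D1 * (z - I)⁻¹) I r := by
    apply ContinuousOn.circleIntegrable hr0.le
    apply continuousOn_const.mul
    apply ContinuousOn.inv₀ (by fun_prop)
    intro z hz
    refine sub_ne_zero.2 fun hc => ?_
    rw [Metric.mem_sphere, hc] at hz
    simp at hz
    exact hr0.ne hz
  have int_2 : CircleIntegrable (fun z => H0 * (z - I) ^ (-2 : ℤ)) I r := by
    apply ContinuousOn.circleIntegrable hr0.le
    apply continuousOn_const.mul
    apply ContinuousOn.zpow₀ (by fun_prop)
    intro z hz
    left
    refine sub_ne_zero.2 fun hc => ?_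
    rw [Metric.mem_sphere, hc] at hz
    simp at hz
    exact hr0.ne hz
  have int_12 : CircleIntegrable
      (fun z => D1 * (z - I)⁻¹ + H0 * (z - I) ^ (-2 : ℤ)) I r := int_1.add int_2
  rw [my_circleIntegral_add int_g int_12, my_circleIntegral_add int_1 int_2]
  -- the dslope part integrates to zero
  have hzero : (∮ z in C(I, r), g z) = 0 := by
    apply Complex.circleIntegral_eq_zero_of_differentiable_on_off_countable hr0.le
      Set.countable_empty (hdg.continuousOn.mono hsub)
    intro z hz
    exact hdg.differentiableAt (Metric.isOpen_ball.mem_nhds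
      ((Metric.ball_subset_ball hr1.le) hz.1))
  rw [hzero, circleIntegral.integral_const_mul, circleIntegral.integral_const_mul,
    circleIntegral.integral_sub_inv_of_mem_ball (Metric.mem_ball_self hr0),
    circleIntegral.integral_sub_zpow_of_ne (by decide) I I r]
  have hπ : (π : ℂ) ≠ 0 := Complex.ofReal_ne_zero.2 Real.pi_ne_zero
  have hsimp : (1 / (2 * (π : ℂ) * I)) * (0 + (D1 * (2 * π * I) + H0 * 0)) = D1 := by
    field_simp
    ring
  rw [hsimp]
  -- compute the derivative of h at I
  have hu : HasDerivAt (fun z : ℂ => a + z * b) b I := by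
    simpa using ((hasDerivAt_id I).mul_const b).const_add a
  have hv1 : HasDerivAt (fun z : ℂ => (z + I) ^ 2) (2 * (I + I)) I := by
    have := ((hasDerivAt_id I).add_const I).pow 2
    simpa [Pi.pow_def] using this
  have hv2 : HasDerivAt (fun z : ℂ => (ξ : ℂ) - z) (-1) I := by
    simpa using (hasDerivAt_id I).const_sub ((ξ : ℂ))
  have hv : HasDerivAt (fun z : ℂ => (z + I) ^ 2 * ((ξ : ℂ) - z))
      (2 * (I + I) * ((ξ : ℂ) - I) + (I + I) ^ 2 * (-1)) I := hv1.mul hv2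
  have hv0 : (I + I) ^ 2 * ((ξ : ℂ) - I) ≠ 0 := by
    apply mul_ne_zero _ hs
    apply pow_ne_zero
    intro hc
    have : (I : ℂ) = 0 := by linear_combination hc / 2
    exact I_ne_zero this
  have hder : HasDerivAt h
      ((b * ((I + I) ^ 2 * ((ξ : ℂ) - I)) -
        (a + I * b) * (2 * (I + I) * ((ξ : ℂ) - I) + (I + I) ^ 2 * (-1))) /
        ((I + I) ^ 2 * ((ξ : ℂ) - I)) ^ 2) I := by
    have := hu.div hv hv0
    simpa [hh, Pi.div_def] using this
  have hV : ((I + I) ^ 2 * ((ξ : ℂ) - I)) = -4 * ((ξ : ℂ) - I) := by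
    linear_combination (4 * ((ξ : ℂ) - I)) * Complex.I_sq
  have hW : 2 * (I + I) * ((ξ : ℂ) - I) + (I + I) ^ 2 * (-1) = 4 * I * ((ξ : ℂ) - I) + 4 := by
    linear_combination (-4 : ℂ) * Complex.I_sq
  rw [← hD1, hder.deriv, hV, hW]
  have hnum : b * (-4 * ((ξ : ℂ) - I)) - (a + I * b) * (4 * I * ((ξ : ℂ) - I) + 4) =
      -4 * I * a * ((ξ : ℂ) - I) - 4 * (a + I * b) := by
    linear_combination (-4 * b * ((ξ : ℂ) - I)) * Complex.I_sq
  rw [hnum]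
  field_simp
end

section
/- For all complex numbers a and b, every real number ξ, and every r with 0 < r < 1, one has (1/(2πi)) ∮_{|η−i|=r} (−aη² − 2bη + a)/((1+η²)³(ξ−η)) dη = (1/2)[ a/(4i(ξ−i)) + (a−ib)/(8(ξ−i)²) + (3ξ−7i)(ib−a)/(8(ξ−i)³) ]. -/
open Complex Real

private lemma IP2 : (I:ℂ)^2 = -1 := Complex.I_sq

private lemma circleIntegral_add' {f g : ℂ → ℂ} {c : ℂ} {R : ℝ}
    (hf : CircleIntegrable f c R) (hg : CircleIntegrable g c R) :
    (∮ z in C(c, R), (f z + g z)) = (∮ z in C(c, R), f z) + ∮ z in C(c, R), g z := by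
  simp only [circleIntegral, smul_add, intervalIntegral.integral_add hf.out hg.out]

/-- For all complex `a`, `b`, every real `ξ` and every `0 < r < 1`,
`(1/(2πi)) ∮_{|η−i|=r} (−aη² − 2bη + a)/((1+η²)³(ξ−η)) dη
  = (1/2)[ a/(4i(ξ−i)) + (a−ib)/(8(ξ−i)²) + (3ξ−7i)(ib−a)/(8(ξ−i)³) ]`. -/
theorem stmt_13 (a b : ℂ) (ξ : ℝ) (r : ℝ) (hr0 : 0 < r) (hr1 : r < 1) :
    (1 / (2 * (π : ℂ) * I)) *
        (∮ η in C(I, r),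
          (-a * η ^ 2 - 2 * b * η + a) / ((1 + η ^ 2) ^ 3 * ((ξ : ℂ) - η))) =
      (1 / 2) * (a / (4 * I * ((ξ : ℂ) - I)) +
        (a - I * b) / (8 * ((ξ : ℂ) - I) ^ 2) +
        (3 * (ξ : ℂ) - 7 * I) * (I * b - a) / (8 * ((ξ : ℂ) - I) ^ 3)) := by
  have habs_s : 1 ≤ ‖(ξ:ℂ) - I‖ := by
    have h1 : ‖(ξ:ℂ) - I‖ ^ 2 = ξ ^ 2 + 1 := by
      rw [Complex.sq_norm]
      simp [Complex.normSq_apply]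
      ring
    nlinarith [norm_nonneg ((ξ:ℂ) - I), sq_nonneg (ξ : ℝ)]
  have hs0 : ((ξ:ℂ) - I) ≠ 0 := by
    intro h; rw [h] at habs_s; simp at habs_s; linarith
  have h8s3 : (8 * ((ξ:ℂ) - I)^3) ≠ 0 := mul_ne_zero (by norm_num) (pow_ne_zero 3 hs0)
  -- points of the closed ball avoid -I and ξ
  have hball : ∀ z ∈ Metric.closedBall (I:ℂ) r, z + I ≠ 0 ∧ (ξ:ℂ) - z ≠ 0 := by
    intro z hz
    rw [Metric.mem_closedBall, Complex.dist_eq] at hz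
    constructor
    · intro h
      have hz' : z = -I := by linear_combination h
      rw [hz'] at hz
      have : ‖(-I - I : ℂ)‖ = 2 := by
        rw [show (-I - I : ℂ) = -(2*I) by ring]
        simp
      rw [this] at hz; linarith
    · intro h
      have hz' : z = (ξ:ℂ) := by linear_combination -h
      rw [hz'] at hz
      linarith
  -- constants of the partial fraction decomposition at the pole I
  set A1 : ℂ := (-a*I*((ξ:ℂ)-I)^2 + (-a+b*I)*((ξ:ℂ)-I) + 2*(a*I+b)) / (8*((ξ:ℂ)-I)^3)
    with hA1_def
  set A2 : ℂ := (((ξ:ℂ)-I)^2*(-a+b*I) + 2*((ξ:ℂ)-I)*(a*I+b)) / (8*((ξ:ℂ)-I)^3) with hA2_def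
  set A3 : ℂ := (2*((ξ:ℂ)-I)^2*(a*I+b)) / (8*((ξ:ℂ)-I)^3) with hA3_def
  -- the regular part
  set G : ℂ → ℂ := fun η => ((-8 : ℂ) * b * η + (3 : ℂ) * b * η^3 + (9 : ℂ) * b * I * η^2
    + (-8 : ℂ) * b * (ξ:ℂ) + (-3 : ℂ) * b * (ξ:ℂ) * η^2 + (1 : ℂ) * b * (ξ:ℂ) * I * η^3
    + (-3 : ℂ) * b * (ξ:ℂ)^2 * η + (-9 : ℂ) * b * (ξ:ℂ)^2 * I + (3 : ℂ) * b * (ξ:ℂ)^3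
    + (-1 : ℂ) * b * (ξ:ℂ)^3 * I * η + (8 : ℂ) * a + (-13 : ℂ) * a * η^2
    + (-15 : ℂ) * a * I * η + (4 : ℂ) * a * I * η^3 + (18 : ℂ) * a * (ξ:ℂ) * η
    + (-3 : ℂ) * a * (ξ:ℂ) * η^3 + (15 : ℂ) * a * (ξ:ℂ) * I + (-12 : ℂ) * a * (ξ:ℂ) * I * η^2
    + (-13 : ℂ) * a * (ξ:ℂ)^2 + (6 : ℂ) * a * (ξ:ℂ)^2 * η^2 + (12 : ℂ) * a * (ξ:ℂ)^2 * I * η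
    + (-1 : ℂ) * a * (ξ:ℂ)^2 * I * η^3 + (-3 : ℂ) * a * (ξ:ℂ)^3 * η
    + (-4 : ℂ) * a * (ξ:ℂ)^3 * I + (1 : ℂ) * a * (ξ:ℂ)^3 * I * η^2)
      / (8 * ((ξ:ℂ)-I)^3 * (η + I)^3 * ((ξ:ℂ) - η)) with hG_def
  -- pointwise identity on the sphere
  have hEq : Set.EqOn
      (fun η : ℂ => (-a * η ^ 2 - 2 * b * η + a) / ((1 + η ^ 2) ^ 3 * ((ξ : ℂ) - η)))
      (fun η : ℂ => A1 * (η - I)⁻¹ + (A2 * (η - I) ^ (-2 : ℤ) +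
        (A3 * (η - I) ^ (-3 : ℤ) + G η))) (Metric.sphere (I:ℂ) r) := by
    intro η hη
    rw [Metric.mem_sphere, Complex.dist_eq] at hη
    have hηI : η - I ≠ 0 := by
      intro h; rw [h] at hη; simp at hη; exact absurd hη.symm (ne_of_gt hr0)
    have hmem : η ∈ Metric.closedBall (I:ℂ) r := by
      rw [Metric.mem_closedBall, Complex.dist_eq, hη]
    obtain ⟨hηmI, hξη⟩ := hball η hmem
    have hfact : (1 + η^2) = (η + I) * (η - I) := by linear_combination IP2
    have hcom : (8 * ((ξ:ℂ)-I)^3 * (η - I)^3 * (η + I)^3 * ((ξ:ℂ) - η)) ≠ 0 :=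
      mul_ne_zero (mul_ne_zero (mul_ne_zero h8s3 (pow_ne_zero 3 hηI))
        (pow_ne_zero 3 hηmI)) hξη
    show (-a * η ^ 2 - 2 * b * η + a) / ((1 + η ^ 2) ^ 3 * ((ξ : ℂ) - η)) =
      A1 * (η - I)⁻¹ + (A2 * (η - I) ^ (-2 : ℤ) + (A3 * (η - I) ^ (-3 : ℤ) + G η))
    have hL : (-a * η ^ 2 - 2 * b * η + a) / ((1 + η ^ 2) ^ 3 * ((ξ : ℂ) - η)) =
        ((-a * η ^ 2 - 2 * b * η + a) * (8*((ξ:ℂ)-I)^3)) /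
          (8 * ((ξ:ℂ)-I)^3 * (η - I)^3 * (η + I)^3 * ((ξ:ℂ) - η)) := by
      rw [hfact, div_eq_div_iff
        (mul_ne_zero (pow_ne_zero 3 (mul_ne_zero hηmI hηI)) hξη) hcom]
      ring
    have ht1 : A1 * (η - I)⁻¹ =
        ((-a*I*((ξ:ℂ)-I)^2 + (-a+b*I)*((ξ:ℂ)-I) + 2*(a*I+b))
            * (η - I)^2 * (η + I)^3 * ((ξ:ℂ) - η)) /
          (8 * ((ξ:ℂ)-I)^3 * (η - I)^3 * (η + I)^3 * ((ξ:ℂ) - η)) := by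
      rw [hA1_def, ← div_eq_mul_inv, div_div,
        div_eq_div_iff (mul_ne_zero h8s3 hηI) hcom]
      ring
    have ht2 : A2 * (η - I) ^ (-2 : ℤ) =
        ((((ξ:ℂ)-I)^2*(-a+b*I) + 2*((ξ:ℂ)-I)*(a*I+b))
            * (η - I) * (η + I)^3 * ((ξ:ℂ) - η)) /
          (8 * ((ξ:ℂ)-I)^3 * (η - I)^3 * (η + I)^3 * ((ξ:ℂ) - η)) := by
      rw [zpow_neg, zpow_ofNat, hA2_def, ← div_eq_mul_inv, div_div,
        div_eq_div_iff (mul_ne_zero h8s3 (pow_ne_zero 2 hηI)) hcom]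
      ring
    have ht3 : A3 * (η - I) ^ (-3 : ℤ) =
        ((2*((ξ:ℂ)-I)^2*(a*I+b)) * (η + I)^3 * ((ξ:ℂ) - η)) /
          (8 * ((ξ:ℂ)-I)^3 * (η - I)^3 * (η + I)^3 * ((ξ:ℂ) - η)) := by
      rw [zpow_neg, zpow_ofNat, hA3_def, ← div_eq_mul_inv, div_div,
        div_eq_div_iff (mul_ne_zero h8s3 (pow_ne_zero 3 hηI)) hcom]
      ring
    have htG : G η =
        (((-8 : ℂ) * b * η + (3 : ℂ) * b * η^3 + (9 : ℂ) * b * I * η^2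
    + (-8 : ℂ) * b * (ξ:ℂ) + (-3 : ℂ) * b * (ξ:ℂ) * η^2 + (1 : ℂ) * b * (ξ:ℂ) * I * η^3
    + (-3 : ℂ) * b * (ξ:ℂ)^2 * η + (-9 : ℂ) * b * (ξ:ℂ)^2 * I + (3 : ℂ) * b * (ξ:ℂ)^3
    + (-1 : ℂ) * b * (ξ:ℂ)^3 * I * η + (8 : ℂ) * a + (-13 : ℂ) * a * η^2
    + (-15 : ℂ) * a * I * η + (4 : ℂ) * a * I * η^3 + (18 : ℂ) * a * (ξ:ℂ) * η
    + (-3 : ℂ) * a * (ξ:ℂ) * η^3 + (15 : ℂ) * a * (ξ:ℂ) * I + (-12 : ℂ) * a * (ξ:ℂ) * I * η^2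
    + (-13 : ℂ) * a * (ξ:ℂ)^2 + (6 : ℂ) * a * (ξ:ℂ)^2 * η^2 + (12 : ℂ) * a * (ξ:ℂ)^2 * I * η
    + (-1 : ℂ) * a * (ξ:ℂ)^2 * I * η^3 + (-3 : ℂ) * a * (ξ:ℂ)^3 * η
    + (-4 : ℂ) * a * (ξ:ℂ)^3 * I + (1 : ℂ) * a * (ξ:ℂ)^3 * I * η^2) * (η - I)^3) /
          (8 * ((ξ:ℂ)-I)^3 * (η - I)^3 * (η + I)^3 * ((ξ:ℂ) - η)) := by
      rw [hG_def]
      rw [div_eq_div_iff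
        (mul_ne_zero (mul_ne_zero h8s3 (pow_ne_zero 3 hηmI)) hξη) hcom]
      ring
    rw [hL, ht1, ht2, ht3, htG, ← add_div, ← add_div, ← add_div]
    have hnum : (-a * η ^ 2 - 2 * b * η + a) * (8*((ξ:ℂ)-I)^3) =
        (-a*I*((ξ:ℂ)-I)^2 + (-a+b*I)*((ξ:ℂ)-I) + 2*(a*I+b))
            * (η - I)^2 * (η + I)^3 * ((ξ:ℂ) - η) +
        ((((ξ:ℂ)-I)^2*(-a+b*I) + 2*((ξ:ℂ)-I)*(a*I+b))
            * (η - I) * (η + I)^3 * ((ξ:ℂ) - η) +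
        ((2*((ξ:ℂ)-I)^2*(a*I+b)) * (η + I)^3 * ((ξ:ℂ) - η) +
        ((-8 : ℂ) * b * η + (3 : ℂ) * b * η^3 + (9 : ℂ) * b * I * η^2
    + (-8 : ℂ) * b * (ξ:ℂ) + (-3 : ℂ) * b * (ξ:ℂ) * η^2 + (1 : ℂ) * b * (ξ:ℂ) * I * η^3
    + (-3 : ℂ) * b * (ξ:ℂ)^2 * η + (-9 : ℂ) * b * (ξ:ℂ)^2 * I + (3 : ℂ) * b * (ξ:ℂ)^3
    + (-1 : ℂ) * b * (ξ:ℂ)^3 * I * η + (8 : ℂ) * a + (-13 : ℂ) * a * η^2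
    + (-15 : ℂ) * a * I * η + (4 : ℂ) * a * I * η^3 + (18 : ℂ) * a * (ξ:ℂ) * η
    + (-3 : ℂ) * a * (ξ:ℂ) * η^3 + (15 : ℂ) * a * (ξ:ℂ) * I + (-12 : ℂ) * a * (ξ:ℂ) * I * η^2
    + (-13 : ℂ) * a * (ξ:ℂ)^2 + (6 : ℂ) * a * (ξ:ℂ)^2 * η^2 + (12 : ℂ) * a * (ξ:ℂ)^2 * I * η
    + (-1 : ℂ) * a * (ξ:ℂ)^2 * I * η^3 + (-3 : ℂ) * a * (ξ:ℂ)^3 * η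
    + (-4 : ℂ) * a * (ξ:ℂ)^3 * I + (1 : ℂ) * a * (ξ:ℂ)^3 * I * η^2) * (η - I)^3)) := by
      linear_combination ((8 : ℂ) * b * η^4 + (-1 : ℂ) * b * η^6 + (-24 : ℂ) * b * I * η^3 + (24 : ℂ) * b * I^2 * η^2 + (4 : ℂ) * b * I^2 * η^4 + (8 : ℂ) * b * I^3 * η + (2 : ℂ) * b * I^3 * η^3 + (-3 : ℂ) * b * I^4 * η^2 + (-2 : ℂ) * b * I^5 * η + (8 : ℂ) * b * (ξ:ℂ) * η^3 + (3 : ℂ) * b * (ξ:ℂ) * η^5 + (-24 : ℂ) * b * (ξ:ℂ) * I * η^2 + (-9 : ℂ) * b * (ξ:ℂ) * I * η^4 + (-24 : ℂ) * b * (ξ:ℂ) * I^2 * η + (-5 : ℂ) * b * (ξ:ℂ) * I^2 * η^3 + (-8 : ℂ) * b * (ξ:ℂ) * I^3 + (3 : ℂ) * b * (ξ:ℂ) * I^3 * η^2 + (6 : ℂ) * b * (ξ:ℂ) * I^4 * η + (2 : ℂ) * b * (ξ:ℂ) * I^5 + (3 : ℂ) * b * (ξ:ℂ)^2 * η^4 +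 (48 : ℂ) * b * (ξ:ℂ)^2 * I * η + (6 : ℂ) * b * (ξ:ℂ)^2 * I * η^3 + (-6 : ℂ) * b * (ξ:ℂ)^2 * I^3 * η + (-3 : ℂ) * b * (ξ:ℂ)^2 * I^4 + (-16 : ℂ) * b * (ξ:ℂ)^3 * η + (-5 : ℂ) * b * (ξ:ℂ)^3 * η^3 + (3 : ℂ) * b * (ξ:ℂ)^3 * I * η^2 + (1 : ℂ) * b * (ξ:ℂ)^3 * I^2 * η + (1 : ℂ) * b * (ξ:ℂ)^3 * I^3 + (-8 : ℂ) * a * η^3 + (13 : ℂ) * a * η^5 + (24 : ℂ) * a * I * η^2 + (-24 : ℂ) * a * I * η^4 + (-1 : ℂ) * a * I * η^6 + (-24 : ℂ) * a * I^2 * η + (2 : ℂ) * a * I^2 * η^3 + (-1 : ℂ) * a * I^2 * η^5 + (16 : ℂ) * a * I^3 * η^2 + (2 : ℂ) * a * I^3 * η^4 + (9 : ℂ) * a * I^4 * η + (2 : ℂ) * a * I^4 * η^3 + (-1 : ℂ) * a * I^5 * η^2 + (-1 : ℂ) * a * I^6 * η + (-18 : ℂ) * a * (ξ:ℂ) * η^4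 + (2 : ℂ) * a * (ξ:ℂ) * η^6 + (39 : ℂ) * a * (ξ:ℂ) * I * η^3 + (3 : ℂ) * a * (ξ:ℂ) * I * η^5 + (24 : ℂ) * a * (ξ:ℂ) * I^2 + (-33 : ℂ) * a * (ξ:ℂ) * I^2 * η^2 + (-3 : ℂ) * a * (ξ:ℂ) * I^2 * η^4 + (-27 : ℂ) * a * (ξ:ℂ) * I^3 * η + (-6 : ℂ) * a * (ξ:ℂ) * I^3 * η^3 + (-9 : ℂ) * a * (ξ:ℂ) * I^4 + (3 : ℂ) * a * (ξ:ℂ) * I^5 * η + (1 : ℂ) * a * (ξ:ℂ) * I^6 + (13 : ℂ) * a * (ξ:ℂ)^2 * η^3 + (-6 : ℂ) * a * (ξ:ℂ)^2 * η^5 + (-24 : ℂ) * a * (ξ:ℂ)^2 * I + (-15 : ℂ) * a * (ξ:ℂ)^2 * I * η^2 + (3 : ℂ) * a * (ξ:ℂ)^2 * I * η^4 + (39 : ℂ) * a * (ξ:ℂ)^2 * I^2 * η + (5 : ℂ) * a * (ξ:ℂ)^2 * I^2 * η^3 + (11 : ℂ) * a * (ξ:ℂ)^2 * I^3 + (3 :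 ℂ) * a * (ξ:ℂ)^2 * I^3 * η^2 + (-3 : ℂ) * a * (ξ:ℂ)^2 * I^4 * η + (-2 : ℂ) * a * (ξ:ℂ)^2 * I^5 + (8 : ℂ) * a * (ξ:ℂ)^3 + (-8 : ℂ) * a * (ξ:ℂ)^3 * η^2 + (4 : ℂ) * a * (ξ:ℂ)^3 * η^4 + (-5 : ℂ) * a * (ξ:ℂ)^3 * I * η^3 + (-8 : ℂ) * a * (ξ:ℂ)^3 * I^2 + (-1 : ℂ) * a * (ξ:ℂ)^3 * I^2 * η^2 + (1 : ℂ) * a * (ξ:ℂ)^3 * I^3 * η + (1 : ℂ) * a * (ξ:ℂ)^3 * I^4) * IP2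
    rw [hnum]
  -- integrability of the pieces
  have hsph_ne : ∀ η ∈ Metric.sphere (I:ℂ) r, η - I ≠ 0 := by
    intro η hη
    rw [Metric.mem_sphere, Complex.dist_eq] at hη
    intro h; rw [h] at hη; simp at hη; exact absurd hη.symm (ne_of_gt hr0)
  have hint1 : CircleIntegrable (fun η : ℂ => A1 * (η - I)⁻¹) I r := by
    apply ContinuousOn.circleIntegrable hr0.le
    apply continuousOn_const.mul
    apply ContinuousOn.inv₀ ((continuousOn_id.sub continuousOn_const))
    intro η hη h
    exact hsph_ne η hη (by simpa using h)
  have hint2 : CircleIntegrable (fun η : ℂ => A2 * (η - I) ^ (-2 : ℤ)) I r := by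
    apply ContinuousOn.circleIntegrable hr0.le
    apply continuousOn_const.mul
    apply ContinuousOn.zpow₀ (continuousOn_id.sub continuousOn_const)
    intro η hη
    exact Or.inl (by simpa using hsph_ne η hη)
  have hint3 : CircleIntegrable (fun η : ℂ => A3 * (η - I) ^ (-3 : ℤ)) I r := by
    apply ContinuousOn.circleIntegrable hr0.le
    apply continuousOn_const.mul
    apply ContinuousOn.zpow₀ (continuousOn_id.sub continuousOn_const)
    intro η hη
    exact Or.inl (by simpa using hsph_ne η hη)
  have hden_ne : ∀ z ∈ Metric.closedBall (I:ℂ) r,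
      8 * ((ξ:ℂ)-I)^3 * (z + I)^3 * ((ξ:ℂ) - z) ≠ 0 := by
    intro z hz
    obtain ⟨h1, h2⟩ := hball z hz
    exact mul_ne_zero (mul_ne_zero h8s3 (pow_ne_zero 3 h1)) h2
  have hGcont : ContinuousOn G (Metric.closedBall (I:ℂ) r) := by
    rw [hG_def]
    apply ContinuousOn.div
    · fun_prop
    · fun_prop
    · exact hden_ne
  have hintG : CircleIntegrable G I r :=
    ContinuousOn.circleIntegrable hr0.le
      (hGcont.mono Metric.sphere_subset_closedBall)
  have hint3G : CircleIntegrable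
      (fun η : ℂ => A3 * (η - I) ^ (-3 : ℤ) + G η) I r := hint3.add hintG
  have hint23G : CircleIntegrable
      (fun η : ℂ => A2 * (η - I) ^ (-2 : ℤ) + (A3 * (η - I) ^ (-3 : ℤ) + G η)) I r :=
    hint2.add hint3G
  -- the circle integral splits
  have hsplit :
      (∮ η in C(I, r),
          (-a * η ^ 2 - 2 * b * η + a) / ((1 + η ^ 2) ^ 3 * ((ξ : ℂ) - η))) =
        (∮ η in C(I, r), A1 * (η - I)⁻¹) +
        ((∮ η in C(I, r), A2 * (η - I) ^ (-2 : ℤ)) +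
        ((∮ η in C(I, r), A3 * (η - I) ^ (-3 : ℤ)) + (∮ η in C(I, r), G η))) := by
    rw [circleIntegral.integral_congr hr0.le hEq]
    rw [circleIntegral_add' hint1 hint23G,
        circleIntegral_add' hint2 hint3G,
        circleIntegral_add' hint3 hintG]
  -- evaluate each piece
  have hv1 : (∮ η in C(I, r), A1 * (η - I)⁻¹) = A1 * (2 * π * I) := by
    rw [circleIntegral.integral_const_mul]
    rw [circleIntegral.integral_sub_inv_of_mem_ball (Metric.mem_ball_self hr0)]
  have hv2 : (∮ η in C(I, r), A2 * (η - I) ^ (-2 : ℤ)) = 0 := by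
    rw [circleIntegral.integral_const_mul,
      circleIntegral.integral_sub_zpow_of_ne (by decide) I I r, mul_zero]
  have hv3 : (∮ η in C(I, r), A3 * (η - I) ^ (-3 : ℤ)) = 0 := by
    rw [circleIntegral.integral_const_mul,
      circleIntegral.integral_sub_zpow_of_ne (by decide) I I r, mul_zero]
  have hvG : (∮ η in C(I, r), G η) = 0 := by
    apply Complex.circleIntegral_eq_zero_of_differentiable_on_off_countable hr0.le
      Set.countable_empty hGcont
    intro z hz
    have hz' : z ∈ Metric.closedBall (I:ℂ) r := Metric.ball_subset_closedBall hz.1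
    rw [hG_def]
    apply DifferentiableAt.div
    · fun_prop
    · fun_prop
    · exact hden_ne z hz'
  rw [hsplit, hv1, hv2, hv3, hvG]
  simp only [zero_add, add_zero]
  have hπ : ((π:ℝ) : ℂ) ≠ 0 := by
    simpa using Real.pi_ne_zero
  have h2πI : (2 * (π:ℂ) * I) ≠ 0 :=
    mul_ne_zero (mul_ne_zero two_ne_zero hπ) Complex.I_ne_zero
  have hclear : (1 / (2 * (π:ℂ) * I)) * (A1 * (2 * (π:ℂ) * I)) = A1 := by
    rw [show (1 / (2 * (π:ℂ) * I)) * (A1 * (2 * (π:ℂ) * I)) =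
      A1 * ((2 * (π:ℂ) * I) * (1 / (2 * (π:ℂ) * I))) from by ring,
      mul_one_div, div_self h2πI, mul_one]
  rw [hclear]
  -- finally, A1 equals the stated value
  rw [hA1_def]
  have hd16 : (8 * I * ((ξ:ℂ)-I)^3) ≠ 0 :=
    mul_ne_zero (mul_ne_zero (by norm_num) Complex.I_ne_zero) (pow_ne_zero 3 hs0)
  have hT1 : a / (4 * I * ((ξ : ℂ) - I)) =
      (2*a*((ξ:ℂ)-I)^2) / (8 * I * ((ξ:ℂ)-I)^3) := by
    rw [div_eq_div_iff
      (mul_ne_zero (mul_ne_zero (by norm_num) Complex.I_ne_zero) hs0) hd16]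
    ring
  have hT2 : (a - I * b) / (8 * ((ξ : ℂ) - I) ^ 2) =
      (I*((ξ:ℂ)-I)*(a - I*b)) / (8 * I * ((ξ:ℂ)-I)^3) := by
    rw [div_eq_div_iff (mul_ne_zero (by norm_num) (pow_ne_zero 2 hs0)) hd16]
    ring
  have hT3 : (3 * (ξ : ℂ) - 7 * I) * (I * b - a) / (8 * ((ξ : ℂ) - I) ^ 3) =
      (I*(3*(ξ:ℂ) - 7*I)*(I*b - a)) / (8 * I * ((ξ:ℂ)-I)^3) := by
    rw [div_eq_div_iff (mul_ne_zero (by norm_num) (pow_ne_zero 3 hs0)) hd16]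
    ring
  rw [hT1, hT2, hT3, ← add_div, ← add_div, div_mul_div_comm, one_mul]
  rw [div_eq_div_iff h8s3
    (mul_ne_zero two_ne_zero hd16)]
  linear_combination ((-32 : ℂ) * b * I^4 + (96 : ℂ) * b * (ξ:ℂ) * I^3 + (-96 : ℂ) * b * (ξ:ℂ)^2 * I^2 + (32 : ℂ) * b * (ξ:ℂ)^3 * I + (16 : ℂ) * a * I^5 + (-80 : ℂ) * a * (ξ:ℂ) * I^4 + (160 : ℂ) * a * (ξ:ℂ)^2 * I^3 + (-160 : ℂ) * a * (ξ:ℂ)^3 * I^2 + (80 : ℂ) * a * (ξ:ℂ)^4 * I + (-16 : ℂ) * a * (ξ:ℂ)^5) * IP2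
end
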